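/- Let P, Q, R be probability distributions on a finite set X and α > 0. Then KL(P‖R) ≤ (1 + 1/α)·KL(P‖Q) + D_{1+α}(Q‖R), where D_{1+α}(Q‖R) = (1/α)·log₂(Σ_x Q(x)^{1+α}/R(x)^α) is the Rényi divergence of order 1+α. -/

import Mathlib

open scoped BigOperators

/-- A probability mass function on a finite set. -/
def IsPMF {X : Type*} [Fintype X] (P : X → ℝ) : Prop :=
  (∀ x, 0 ≤ P x) ∧ ∑ x, P x = 1

/-- KL divergence (in bits) between distributions on a finite set. -/
noncomputable def KLdiv {X : Type*} [Fintype X] (P Q : X → ℝ) : ℝ :=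
  ∑ x, P x * Real.logb 2 (P x / Q x)

/-- Rényi divergence (in bits) of order `1 + α` between distributions. -/
noncomputable def renyiDiv {X : Type*} [Fintype X] (α : ℝ) (Q R : X → ℝ) : ℝ :=
  (1 / α) * Real.logb 2 (∑ x, Q x ^ (1 + α) / R x ^ α)

/-- Weak triangle inequality for the KL divergence via Rényi divergences. -/
theorem kl_triangle {X : Type*} [Fintype X] (α : ℝ) (hα : 0 < α)
    (P Q R : X → ℝ) (hP : IsPMF P) (hQ : IsPMF Q) (hR : IsPMF R)
    (hQpos : ∀ x, 0 < Q x) (hRpos : ∀ x, 0 < R x) :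
    KLdiv P R ≤ (1 + 1 / α) * KLdiv P Q + renyiDiv α Q R := by
  obtain ⟨hPnn, hPsum⟩ := hP
  have hlog2 : (0:ℝ) < Real.log 2 := Real.log_pos (by norm_num)
  set a : X → ℝ := fun x => Q x ^ (1 + α) / R x ^ α with ha
  have hapos : ∀ x, 0 < a x := fun x =>
    div_pos (Real.rpow_pos_of_pos (hQpos x) _) (Real.rpow_pos_of_pos (hRpos x) _)
  set S : ℝ := ∑ x, a x with hSdef
  have hne : (Finset.univ : Finset X).Nonempty := by
    rcases (Finset.univ : Finset X).eq_empty_or_nonempty with h | h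
    · rw [h] at hPsum; simp at hPsum
    · exact h
  have hSpos : 0 < S := Finset.sum_pos (fun x _ => hapos x) hne
  -- key Jensen / log-sum inequality in natural log
  have key : ∑ x, P x * Real.log (a x / P x) ≤ Real.log S := by
    have h1 : ∀ x ∈ Finset.univ, P x * Real.log (a x / P x) ≤
        P x * Real.log S + (a x / S - P x) := by
      intro x _
      rcases eq_or_lt_of_le (hPnn x) with h | h
      · rw [← h]
        simp only [zero_mul, zero_add, sub_zero]
        exact div_nonneg (le_of_lt (hapos x)) (le_of_lt hSpos)
      · have hu : 0 < a x / (P x * S) := div_pos (hapos x) (mul_pos h hSpos)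
        have hlog := Real.log_le_sub_one_of_pos hu
        have hid : Real.log (a x / P x) = Real.log (a x / (P x * S)) + Real.log S := by
          rw [Real.log_div (ne_of_gt (hapos x)) (ne_of_gt (mul_pos h hSpos)),
            Real.log_div (ne_of_gt (hapos x)) (ne_of_gt h),
            Real.log_mul (ne_of_gt h) (ne_of_gt hSpos)]
          ring
        have hmul : P x * (a x / (P x * S)) = a x / S := by
          field_simp
        nlinarith [mul_le_mul_of_nonneg_left hlog (le_of_lt h)]
    calc ∑ x, P x * Real.log (a x / P x)
        ≤ ∑ x, (P x * Real.log S + (a x / S - P x)) := Finset.sum_le_sum h1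
      _ = Real.log S := by
          rw [Finset.sum_add_distrib, ← Finset.sum_mul, hPsum,
            Finset.sum_sub_distrib, ← Finset.sum_div, ← hSdef, hPsum,
            div_self (ne_of_gt hSpos)]
          ring
  have keyb : ∑ x, P x * Real.logb 2 (a x / P x) ≤ Real.logb 2 S := by
    simp only [Real.logb, ← mul_div_assoc]
    rw [← Finset.sum_div]
    exact (div_le_div_iff_of_pos_right hlog2).mpr key
  have hmain : ∀ x ∈ (Finset.univ : Finset X), α * (P x * Real.logb 2 (P x / R x)) =
      (1 + α) * (P x * Real.logb 2 (P x / Q x)) + P x * Real.logb 2 (a x / P x) := by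
    intro x _
    rcases eq_or_lt_of_le (hPnn x) with h | h
    · rw [← h]; ring
    · have hQ' := hQpos x
      have hR' := hRpos x
      have hlid : α * Real.log (P x / R x) =
          (1 + α) * Real.log (P x / Q x) + Real.log (a x / P x) := by
        rw [Real.log_div (ne_of_gt h) (ne_of_gt hR'),
          Real.log_div (ne_of_gt h) (ne_of_gt hQ'),
          Real.log_div (ne_of_gt (hapos x)) (ne_of_gt h)]
        have hla : Real.log (a x) = (1 + α) * Real.log (Q x) - α * Real.log (R x) := by
          rw [ha]
          simp only
          rw [Real.log_div (ne_of_gt (Real.rpow_pos_of_pos hQ' _))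
              (ne_of_gt (Real.rpow_pos_of_pos hR' _)),
            Real.log_rpow hQ', Real.log_rpow hR']
        rw [hla]; ring
      simp only [Real.logb]
      linear_combination (P x / Real.log 2) * hlid
  have hsum : α * KLdiv P R =
      (1 + α) * KLdiv P Q + ∑ x, P x * Real.logb 2 (a x / P x) := by
    simp only [KLdiv, Finset.mul_sum]
    rw [← Finset.sum_add_distrib]
    exact Finset.sum_congr rfl hmain
  have hineq : α * KLdiv P R ≤ (1 + α) * KLdiv P Q + Real.logb 2 S := by
    rw [hsum]; linarith [keyb]
  have hrS : (∑ x, Q x ^ (1 + α) / R x ^ α) = S := rfl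
  have hrw : (1 + 1 / α) * KLdiv P Q + renyiDiv α Q R =
      ((1 + α) * KLdiv P Q + Real.logb 2 S) / α := by
    rw [renyiDiv, hrS]
    field_simp
    ring_nf
  rw [hrw, le_div_iff₀ hα]
  nlinarith [hineq]
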